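/- Let R⁻¹ be the tridiagonal matrix with diagonal entries (R⁻¹)₁₁ = 1/(1−e^{−2θΔ₂}), (R⁻¹)ᵢᵢ = 1/(1−e^{−2θΔᵢ}) + e^{−2θΔ_{i+1}}/(1−e^{−2θΔ_{i+1}}) for 2 ≤ i ≤ n−1, (R⁻¹)ₙₙ = 1/(1−e^{−2θΔₙ}), and off-diagonal entries (R⁻¹)_{i,i+1} = (R⁻¹)_{i+1,i} = −e^{−θΔ_{i+1}}/(1−e^{−2θΔ_{i+1}}), all other entries 0. Let R be the matrix with entries Rᵢⱼ = e^{−θ|sᵢ−sⱼ|} where sᵢ − s_{i−1} = Δᵢ > 0. Then R·R⁻¹ = I. -/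
import Mathlib


/-- The explicit tridiagonal candidate inverse of the exponential covariance
matrix at points `s 1 < s 2 < ... < s n` (index `i : Fin n` corresponds to the
point `s (i+1)`), with gaps `Δ k = s k - s (k-1)`. -/
noncomputable def expCovInv (n : ℕ) (θ : ℝ) (s : ℕ → ℝ) : Matrix (Fin n) (Fin n) ℝ :=
  Matrix.of fun i j : Fin n =>
    let Δ : ℕ → ℝ := fun k => s k - s (k - 1)
    if i = j then
      (if i.val = 0 then 1 / (1 - Real.exp (-2 * θ * Δ 2))
       else if i.val = n - 1 then 1 / (1 - Real.exp (-2 * θ * Δ n))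
       else 1 / (1 - Real.exp (-2 * θ * Δ (i.val + 1)))
            + Real.exp (-2 * θ * Δ (i.val + 2)) / (1 - Real.exp (-2 * θ * Δ (i.val + 2))))
    else if j.val = i.val + 1 then
      -Real.exp (-θ * Δ (i.val + 2)) / (1 - Real.exp (-2 * θ * Δ (i.val + 2)))
    else if i.val = j.val + 1 then
      -Real.exp (-θ * Δ (j.val + 2)) / (1 - Real.exp (-2 * θ * Δ (j.val + 2)))
    else 0

/-- ℕ-indexed version of `expCovInv`'s entries. -/
noncomputable def Wfun (n : ℕ) (θ : ℝ) (s : ℕ → ℝ) (a b : ℕ) : ℝ :=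
  if a = b then
    (if a = 0 then 1 / (1 - Real.exp (-2 * θ * (s 2 - s 1)))
     else if a = n - 1 then 1 / (1 - Real.exp (-2 * θ * (s n - s (n - 1))))
     else 1 / (1 - Real.exp (-2 * θ * (s (a + 1) - s a)))
          + Real.exp (-2 * θ * (s (a + 2) - s (a + 1)))
            / (1 - Real.exp (-2 * θ * (s (a + 2) - s (a + 1)))))
  else if b = a + 1 then
    -Real.exp (-θ * (s (a + 2) - s (a + 1))) / (1 - Real.exp (-2 * θ * (s (a + 2) - s (a + 1))))
  else if a = b + 1 then
    -Real.exp (-θ * (s (b + 2) - s (b + 1))) / (1 - Real.exp (-2 * θ * (s (b + 2) - s (b + 1))))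
  else 0

lemma Wfun_zero (n : ℕ) (θ : ℝ) (s : ℕ → ℝ) {a b : ℕ} (h1 : a ≠ b) (h2 : b ≠ a + 1)
    (h3 : a ≠ b + 1) : Wfun n θ s a b = 0 := by
  unfold Wfun
  rw [if_neg h1, if_neg h2, if_neg h3]

lemma Wfun_left (n : ℕ) (θ : ℝ) (s : ℕ → ℝ) (a : ℕ) :
    Wfun n θ s a (a + 1) =
      -Real.exp (-θ * (s (a + 2) - s (a + 1)))
        / (1 - Real.exp (-2 * θ * (s (a + 2) - s (a + 1)))) := by
  unfold Wfun
  rw [if_neg (by omega), if_pos rfl]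

lemma Wfun_right (n : ℕ) (θ : ℝ) (s : ℕ → ℝ) (a : ℕ) :
    Wfun n θ s (a + 1) a =
      -Real.exp (-θ * (s (a + 2) - s (a + 1)))
        / (1 - Real.exp (-2 * θ * (s (a + 2) - s (a + 1)))) := by
  unfold Wfun
  rw [if_neg (by omega), if_neg (by omega), if_pos rfl]

lemma sum_restrict {g : ℕ → ℝ} {n m1 m2 : ℕ} (h1 : m2 ≤ n)
    (h0 : ∀ k, k < n → (k < m1 ∨ m2 ≤ k) → g k = 0) :
    ∑ k ∈ Finset.range n, g k = ∑ k ∈ Finset.Ico m1 m2, g k := by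
  refine (Finset.sum_subset ?_ ?_).symm
  · intro k hk
    simp only [Finset.mem_Ico, Finset.mem_range] at hk ⊢
    omega
  · intro k hk hk2
    simp only [Finset.mem_Ico, Finset.mem_range, not_and, not_le, not_lt] at hk hk2
    exact h0 k hk (by omega)

theorem stmt12 (n : ℕ) (hn : 2 ≤ n) (θ : ℝ) (hθ : 0 < θ) (s : ℕ → ℝ)
    (hs1 : s 1 = 0) (hs : ∀ i, 1 ≤ i → i < n → s i < s (i + 1)) :
    (Matrix.of fun i j : Fin n =>
        Real.exp (-θ * |s (i.val + 1) - s (j.val + 1)|)) * expCovInv n θ s = 1 := by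
  have smono : ∀ u v : ℕ, 1 ≤ u → u ≤ v → v ≤ n → s u ≤ s v := by
    intro u v h1 huv hvn
    induction v with
    | zero => omega
    | succ w ih =>
      rcases Nat.eq_or_lt_of_le huv with h | h
      · rw [h]
      · have hw : u ≤ w := by omega
        exact le_trans (ih hw (by omega)) (le_of_lt (hs w (by omega) (by omega)))
  have habs : ∀ u v : ℕ, 1 ≤ u → u ≤ v → v ≤ n → |s u - s v| = s v - s u := by
    intro u v h1 huv hvn
    rw [abs_sub_comm]
    exact abs_of_nonneg (sub_nonneg.2 (smono u v h1 huv hvn))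
  have Emul : ∀ u v w : ℕ, 1 ≤ u → u ≤ v → v ≤ w → w ≤ n →
      Real.exp (-θ * |s u - s w|) =
        Real.exp (-θ * |s u - s v|) * Real.exp (-θ * |s v - s w|) := by
    intro u v w h1 huv hvw hwn
    rw [habs u v h1 huv (by omega), habs v w (by omega) hvw hwn,
      habs u w h1 (by omega) hwn, ← Real.exp_add]
    congr 1
    ring
  have hgap : ∀ m : ℕ, 1 ≤ m → m < n → 0 < s (m + 1) - s m := by
    intro m h1 h2
    exact sub_pos.2 (hs m h1 h2)
  have hexp : ∀ d : ℝ, 0 < d → (0 < Real.exp (-θ * d) ∧ Real.exp (-θ * d) < 1 ∧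
      Real.exp (-2 * θ * d) = Real.exp (-θ * d) * Real.exp (-θ * d)) := by
    intro d hd
    refine ⟨Real.exp_pos _, Real.exp_lt_one_iff.2 (by nlinarith), ?_⟩
    rw [← Real.exp_add]
    congr 1
    ring
  have hexpne : ∀ d : ℝ, 0 < d →
      1 - Real.exp (-θ * d) * Real.exp (-θ * d) ≠ 0 := by
    intro d hd
    obtain ⟨h0, h1, -⟩ := hexp d hd
    nlinarith
  ext i j
  rw [Matrix.mul_apply, Matrix.one_apply]
  have hM : ∀ k : Fin n, expCovInv n θ s k j = Wfun n θ s k.val j.val := by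
    intro k
    simp only [expCovInv, Wfun, Matrix.of_apply, Fin.ext_iff]
    norm_num
  simp only [Matrix.of_apply, hM]
  rw [Fin.sum_univ_eq_sum_range
    (fun k => Real.exp (-θ * |s (↑i + 1) - s (k + 1)|) * Wfun n θ s k ↑j)]
  have hij : (i = j) ↔ ((i : ℕ) = (j : ℕ)) := Fin.ext_iff
  simp only [hij]
  have hti : (i : ℕ) < n := i.isLt
  have htj : (j : ℕ) < n := j.isLt
  rcases Nat.lt_or_ge (j : ℕ) 1 with hj0 | hj1
  · -- column 0
    have hj : (j : ℕ) = 0 := by omega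
    rw [hj]
    obtain ⟨hb0, hb1, hbsq⟩ := hexp (s 2 - s 1) (hgap 1 le_rfl (by omega))
    have hbne := hexpne (s 2 - s 1) (hgap 1 le_rfl (by omega))
    have hres := sum_restrict
      (g := fun k => Real.exp (-θ * |s ((i : ℕ) + 1) - s (k + 1)|) * Wfun n θ s k 0)
      (n := n) (m1 := 0) (m2 := 2) (by omega)
      (fun k hk hk2 =>
        mul_eq_zero_of_right _ (Wfun_zero n θ s (by omega) (by omega) (by omega)))
    rw [hres, ← Finset.range_eq_Ico, Finset.sum_range_succ, Finset.sum_range_one]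
    have hW0 : Wfun n θ s 0 0 = 1 / (1 - Real.exp (-2 * θ * (s 2 - s 1))) := by
      unfold Wfun
      rw [if_pos rfl, if_pos rfl]
    have hW1 := Wfun_right n θ s 0
    rw [show (0:ℕ) + 1 = 1 from rfl, show (0:ℕ) + 2 = 2 from rfl] at hW1
    rw [show (0:ℕ) + 1 = 1 from rfl, show (1:ℕ) + 1 = 2 from rfl, hW0, hW1, hbsq]
    rcases Nat.lt_or_ge (i : ℕ) 1 with hi0 | hi1
    · have hi : (i : ℕ) = 0 := by omega
      rw [hi, if_pos rfl, show (0:ℕ) + 1 = 1 from rfl]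
      have hE0 : Real.exp (-θ * |s 1 - s 1|) = 1 := by simp
      have hE1 : Real.exp (-θ * |s 1 - s 2|) = Real.exp (-θ * (s 2 - s 1)) := by
        rw [habs 1 2 le_rfl (by omega) (by omega)]
      rw [hE0, hE1]
      trans ((1 - Real.exp (-θ * (s 2 - s 1)) * Real.exp (-θ * (s 2 - s 1)))
        / (1 - Real.exp (-θ * (s 2 - s 1)) * Real.exp (-θ * (s 2 - s 1))))
      · ring
      · exact div_self hbne
    · rw [if_neg (by omega)]
      have hE : Real.exp (-θ * |s ((i : ℕ) + 1) - s 1|) =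
          Real.exp (-θ * |s ((i : ℕ) + 1) - s 2|) * Real.exp (-θ * (s 2 - s 1)) := by
        rw [abs_sub_comm, Emul 1 2 ((i : ℕ) + 1) le_rfl (by omega) (by omega) (by omega),
          habs 1 2 le_rfl (by omega) (by omega), abs_sub_comm]
        ring
      rw [hE]
      ring
  · rcases Nat.lt_or_ge (j : ℕ) (n - 1) with hjmid | hjtop
    · -- middle column
      obtain ⟨m, hm⟩ : ∃ m, (j : ℕ) = m + 1 := ⟨(j : ℕ) - 1, by omega⟩
      rw [hm]
      obtain ⟨ha0, ha1, hasq⟩ := hexp (s (m + 2) - s (m + 1)) (hgap (m + 1) (by omega) (by omega))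
      have hane := hexpne (s (m + 2) - s (m + 1)) (hgap (m + 1) (by omega) (by omega))
      obtain ⟨hb0, hb1, hbsq⟩ := hexp (s (m + 3) - s (m + 2)) (hgap (m + 2) (by omega) (by omega))
      have hbne := hexpne (s (m + 3) - s (m + 2)) (hgap (m + 2) (by omega) (by omega))
      have hres := sum_restrict
        (g := fun k => Real.exp (-θ * |s ((i : ℕ) + 1) - s (k + 1)|) * Wfun n θ s k (m + 1))
        (n := n) (m1 := m) (m2 := m + 3) (by omega)
        (fun k hk hk2 =>
          mul_eq_zero_of_right _ (Wfun_zero n θ s (by omega) (by omega) (by omega)))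
      rw [hres, Finset.sum_Ico_eq_sum_range, show m + 3 - m = 3 from by omega,
        Finset.sum_range_succ, Finset.sum_range_succ, Finset.sum_range_one]
      rw [show m + 0 = m from rfl, show m + 1 + 1 = m + 2 from rfl,
        show m + 2 + 1 = m + 3 from rfl]
      have hWm := Wfun_left n θ s m
      have hWp := Wfun_right n θ s (m + 1)
      rw [show m + 1 + 1 = m + 2 from rfl, show m + 1 + 2 = m + 3 from rfl] at hWp
      have hWd : Wfun n θ s (m + 1) (m + 1) =
          1 / (1 - Real.exp (-2 * θ * (s (m + 2) - s (m + 1))))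
            + Real.exp (-2 * θ * (s (m + 3) - s (m + 2)))
              / (1 - Real.exp (-2 * θ * (s (m + 3) - s (m + 2)))) := by
        unfold Wfun
        rw [if_pos rfl, if_neg (by omega), if_neg (by omega),
          show m + 1 + 1 = m + 2 from rfl, show m + 1 + 2 = m + 3 from rfl]
      rw [hWm, hWp, hWd, hasq, hbsq]
      rcases Nat.lt_or_ge (i : ℕ) (m + 1) with hilt | hige
      · rw [if_neg (by omega)]
        have hE1 : Real.exp (-θ * |s ((i : ℕ) + 1) - s (m + 2)|) =
            Real.exp (-θ * |s ((i : ℕ) + 1) - s (m + 1)|)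
              * Real.exp (-θ * (s (m + 2) - s (m + 1))) := by
          rw [Emul ((i : ℕ) + 1) (m + 1) (m + 2) (by omega) (by omega) (by omega) (by omega),
            habs (m + 1) (m + 2) (by omega) (by omega) (by omega)]
        have hE2 : Real.exp (-θ * |s ((i : ℕ) + 1) - s (m + 3)|) =
            Real.exp (-θ * |s ((i : ℕ) + 1) - s (m + 1)|)
              * Real.exp (-θ * (s (m + 2) - s (m + 1)))
              * Real.exp (-θ * (s (m + 3) - s (m + 2))) := by
          rw [Emul ((i : ℕ) + 1) (m + 2) (m + 3) (by omega) (by omega) (by omega) (by omega),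
            habs (m + 2) (m + 3) (by omega) (by omega) (by omega), hE1]
        rw [hE1, hE2]
        ring
      · rcases Nat.eq_or_lt_of_le hige with hieq | higt
        · rw [if_pos hieq.symm, ← hieq]
          have hE0 : Real.exp (-θ * |s (m + 1 + 1) - s (m + 1)|) =
              Real.exp (-θ * (s (m + 2) - s (m + 1))) := by
            rw [show m + 1 + 1 = m + 2 from rfl, abs_sub_comm,
              habs (m + 1) (m + 2) (by omega) (by omega) (by omega)]
          have hE1 : Real.exp (-θ * |s (m + 1 + 1) - s (m + 2)|) = 1 := by
            rw [show m + 1 + 1 = m + 2 from rfl]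
            simp
          have hE2 : Real.exp (-θ * |s (m + 1 + 1) - s (m + 3)|) =
              Real.exp (-θ * (s (m + 3) - s (m + 2))) := by
            rw [show m + 1 + 1 = m + 2 from rfl,
              habs (m + 2) (m + 3) (by omega) (by omega) (by omega)]
          rw [hE0, hE1, hE2]
          trans ((1 - Real.exp (-θ * (s (m + 2) - s (m + 1))) * Real.exp (-θ * (s (m + 2) - s (m + 1))))
            / (1 - Real.exp (-θ * (s (m + 2) - s (m + 1))) * Real.exp (-θ * (s (m + 2) - s (m + 1)))))
          · ring
          · exact div_self hane
        · rw [if_neg (by omega)]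
          have hE1 : Real.exp (-θ * |s ((i : ℕ) + 1) - s (m + 2)|) =
              Real.exp (-θ * |s ((i : ℕ) + 1) - s (m + 3)|)
                * Real.exp (-θ * (s (m + 3) - s (m + 2))) := by
            rw [abs_sub_comm,
              Emul (m + 2) (m + 3) ((i : ℕ) + 1) (by omega) (by omega) (by omega) (by omega),
              habs (m + 2) (m + 3) (by omega) (by omega) (by omega), abs_sub_comm]
            ring
          have hE0 : Real.exp (-θ * |s ((i : ℕ) + 1) - s (m + 1)|) =
              Real.exp (-θ * |s ((i : ℕ) + 1) - s (m + 3)|)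
                * Real.exp (-θ * (s (m + 3) - s (m + 2)))
                * Real.exp (-θ * (s (m + 2) - s (m + 1))) := by
            rw [abs_sub_comm,
              Emul (m + 1) (m + 2) ((i : ℕ) + 1) (by omega) (by omega) (by omega) (by omega),
              habs (m + 1) (m + 2) (by omega) (by omega) (by omega), abs_sub_comm, hE1]
            ring
          rw [hE0, hE1]
          trans (Real.exp (-θ * |s ((i : ℕ) + 1) - s (m + 3)|) * Real.exp (-θ * (s (m + 3) - s (m + 2)))
              * ((1 - Real.exp (-θ * (s (m + 2) - s (m + 1))) * Real.exp (-θ * (s (m + 2) - s (m + 1))))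
                / (1 - Real.exp (-θ * (s (m + 2) - s (m + 1))) * Real.exp (-θ * (s (m + 2) - s (m + 1)))))
            - Real.exp (-θ * |s ((i : ℕ) + 1) - s (m + 3)|) * Real.exp (-θ * (s (m + 3) - s (m + 2)))
              * ((1 - Real.exp (-θ * (s (m + 3) - s (m + 2))) * Real.exp (-θ * (s (m + 3) - s (m + 2))))
                / (1 - Real.exp (-θ * (s (m + 3) - s (m + 2))) * Real.exp (-θ * (s (m + 3) - s (m + 2))))))
          · ring
          · rw [div_self hane, div_self hbne]
            ring
    · -- last column
      obtain ⟨m, hm2⟩ : ∃ m, n = m + 2 := ⟨n - 2, by omega⟩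
      have hj : (j : ℕ) = m + 1 := by omega
      rw [hj]
      obtain ⟨ha0, ha1, hasq⟩ := hexp (s (m + 2) - s (m + 1)) (hgap (m + 1) (by omega) (by omega))
      have hane := hexpne (s (m + 2) - s (m + 1)) (hgap (m + 1) (by omega) (by omega))
      have hres := sum_restrict
        (g := fun k => Real.exp (-θ * |s ((i : ℕ) + 1) - s (k + 1)|) * Wfun n θ s k (m + 1))
        (n := n) (m1 := m) (m2 := m + 2) (by omega)
        (fun k hk hk2 =>
          mul_eq_zero_of_right _ (Wfun_zero n θ s (by omega) (by omega) (by omega)))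
      rw [hres, Finset.sum_Ico_eq_sum_range, show m + 2 - m = 2 from by omega,
        Finset.sum_range_succ, Finset.sum_range_one]
      rw [show m + 0 = m from rfl, show m + 1 + 1 = m + 2 from rfl]
      have hWm := Wfun_left n θ s m
      have hWd : Wfun n θ s (m + 1) (m + 1) =
          1 / (1 - Real.exp (-2 * θ * (s (m + 2) - s (m + 1)))) := by
        unfold Wfun
        rw [if_pos rfl, if_neg (by omega), if_pos (by omega),
          show n = m + 2 from hm2, show m + 2 - 1 = m + 1 from by omega]
      rw [hWm, hWd, hasq]
      rcases Nat.lt_or_ge (i : ℕ) (m + 1) with hilt | hige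
      · rw [if_neg (by omega)]
        have hE1 : Real.exp (-θ * |s ((i : ℕ) + 1) - s (m + 2)|) =
            Real.exp (-θ * |s ((i : ℕ) + 1) - s (m + 1)|)
              * Real.exp (-θ * (s (m + 2) - s (m + 1))) := by
          rw [Emul ((i : ℕ) + 1) (m + 1) (m + 2) (by omega) (by omega) (by omega) (by omega),
            habs (m + 1) (m + 2) (by omega) (by omega) (by omega)]
        rw [hE1]
        ring
      · have hieq : (i : ℕ) = m + 1 := by omega
        rw [if_pos hieq, hieq]
        have hE0 : Real.exp (-θ * |s (m + 1 + 1) - s (m + 1)|) =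
            Real.exp (-θ * (s (m + 2) - s (m + 1))) := by
          rw [show m + 1 + 1 = m + 2 from rfl, abs_sub_comm,
            habs (m + 1) (m + 2) (by omega) (by omega) (by omega)]
        have hE1 : Real.exp (-θ * |s (m + 1 + 1) - s (m + 2)|) = 1 := by
          rw [show m + 1 + 1 = m + 2 from rfl]
          simp
        rw [hE0, hE1]
        trans ((1 - Real.exp (-θ * (s (m + 2) - s (m + 1))) * Real.exp (-θ * (s (m + 2) - s (m + 1))))
          / (1 - Real.exp (-θ * (s (m + 2) - s (m + 1))) * Real.exp (-θ * (s (m + 2) - s (m + 1)))))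
        · ring
        · exact div_self hane
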